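/- For x ∈ h_r, the element ν_*(x) ∈ ∧²p is given by ν_*(x) = (1/2) Σ_{i ∈ I^+} γ_i(x) b_i ∧ d_i, where {b_i}_{i∈I^+} is a basis of p^+ consisting of ad h_r weight vectors of weights γ_i and {d_i} is the B-dual basis of p^−. -/

import Mathlib

/-- A Lie algebra is reductive if its radical coincides with its center. -/
def LieAlgebra.IsReductive' (R L : Type*) [CommRing R] [LieRing L] [LieAlgebra R L] : Prop :=
  LieAlgebra.radical R L = LieAlgebra.center R L

noncomputable instance : Invertible (2 : ℂ) := invertibleOfNonzero two_ne_zero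

open CliffordAlgebra


set_option maxHeartbeats 1000000

section Aux

variable {R : Type*} {M : Type*} [CommRing R] [AddCommGroup M] [Module R M]

/-- commutator of a product of two generators with a generator -/
lemma aux_comm_ii (Q : QuadraticForm R M) (a b y : M) :
    ι Q a * ι Q b * ι Q y - ι Q y * (ι Q a * ι Q b)
      = QuadraticMap.polar Q b y • ι Q a - QuadraticMap.polar Q a y • ι Q b := by
  have h1 : ι Q y * ι Q a = algebraMap R _ (QuadraticMap.polar Q y a) - ι Q a * ι Q y :=
    ι_mul_ι_comm y a
  have h2 : ι Q y * ι Q b = algebraMap R _ (QuadraticMap.polar Q y b) - ι Q b * ι Q y :=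
    ι_mul_ι_comm y b
  have e : ι Q y * (ι Q a * ι Q b)
      = QuadraticMap.polar Q y a • ι Q b - QuadraticMap.polar Q y b • ι Q a
        + ι Q a * ι Q b * ι Q y := by
    rw [← mul_assoc, h1, sub_mul, ← Algebra.smul_def, mul_assoc, h2, mul_sub,
      ← Algebra.commutes, ← Algebra.smul_def, ← mul_assoc]
    abel
  rw [e, QuadraticMap.polar_comm Q y a, QuadraticMap.polar_comm Q y b]
  abel

variable {M₂ : Type*} [AddCommGroup M₂] [Module ℂ M₂]

lemma aux_assoc (F : LinearMap.BilinForm ℂ M₂) (hF : F.flip = F) (Q : QuadraticForm ℂ M₂)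
    (hQ : Q = F.toQuadraticMap) :
    QuadraticMap.associated (R := ℂ) Q = F := by
  rw [hQ]
  exact QuadraticMap.associated_left_inverse' (S := ℂ) hF

lemma aux_symm_ii (F : LinearMap.BilinForm ℂ M₂) (hF : F.flip = F) (Q : QuadraticForm ℂ M₂)
    (hQ : Q = F.toQuadraticMap) (u v : M₂) :
    (equivExterior Q).symm (ExteriorAlgebra.ι ℂ u * ExteriorAlgebra.ι ℂ v)
      = ι Q u * ι Q v - algebraMap ℂ _ (F u v) := by
  show (equivExterior Q).symm (ι (0 : QuadraticForm ℂ M₂) u * ι 0 v) = _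
  rw [equivExterior, changeFormEquiv_symm, changeFormEquiv_apply, changeForm_ι_mul_ι]
  congr 1
  rw [map_neg]
  simp [aux_assoc F hF Q hQ]

lemma aux_fwd_ii (F : LinearMap.BilinForm ℂ M₂) (hF : F.flip = F) (Q : QuadraticForm ℂ M₂)
    (hQ : Q = F.toQuadraticMap) (u v : M₂) :
    equivExterior Q (ι Q u * ι Q v)
      = ExteriorAlgebra.ι ℂ u * ExteriorAlgebra.ι ℂ v + algebraMap ℂ _ (F u v) := by
  rw [equivExterior, changeFormEquiv_apply, changeForm_ι_mul_ι]
  rw [map_neg, aux_assoc F hF Q hQ]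
  simp only [LinearMap.neg_apply, map_neg, sub_neg_eq_add]

end Aux

/-- For `x ∈ h_r`, the spin element `ν_*(x) ∈ ∧²p` equals
`(1/2) Σ_i γ_i(x) b_i ∧ d_i`, where `{b_i}` is a weight basis of `p^+` with weights
`γ_i` and `{d_i}` the `B`-dual basis of `p^-`.  (Since `B(b_i, d_i) = 1`, the wedge
`b_i ∧ d_i` is the Clifford element `ι b_i * ι d_i - 1`.) -/
theorem stmt14 (g : Type*) [LieRing g] [LieAlgebra ℂ g] [Module.Finite ℂ g]
    [LieAlgebra.IsSemisimple ℂ g]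
    (B : LinearMap.BilinForm ℂ g) (hBsymm : B.IsSymm)
    (hBinv : ∀ x y z : g, B ⁅x, y⁆ z = B x ⁅y, z⁆)
    (hBnd : B.Nondegenerate)
    (r : LieSubalgebra ℂ g) (hred : LieAlgebra.IsReductive' ℂ r)
    (hBr : (B.restrict r.toSubmodule).Nondegenerate)
    (p : Submodule ℂ g) (hp : p = B.orthogonal r.toSubmodule)
    (hbr : ∀ (x : r) (y : p), ⁅(x : g), (y : g)⁆ ∈ p)
    (Q : QuadraticForm ℂ p) (hQ : Q = (B.restrict p).toQuadraticMap)
    -- the Cartan subalgebra `h_r` of `r`, inside `g`: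
    (hr : LieSubalgebra ℂ g) (hrr : hr ≤ r)
    -- weight bases `{b_i}` of `p^+` and `{d_i}` of `p^-`, `B`-dual to each other:
    (n : ℕ) (bb dd : Fin n → p) (γ : Fin n → Module.Dual ℂ g)
    (hwb : ∀ x ∈ hr, ∀ i, ⁅x, (bb i : g)⁆ = γ i x • (bb i : g))
    (hwd : ∀ x ∈ hr, ∀ i, ⁅x, (dd i : g)⁆ = -(γ i x) • (dd i : g))
    (hdual : ∀ i j, B (bb i) (dd j) = if i = j then 1 else 0)
    (hbiso : ∀ i j, B (bb i) (bb j) = 0) (hdiso : ∀ i j, B (dd i) (dd j) = 0)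
    -- the rest of `p` is the centralizer `p^0` of `h_r` in `p`:
    (p0 : Submodule ℂ p)
    (hp0 : ∀ z ∈ p0, ∀ x ∈ hr, ⁅x, (z : g)⁆ = 0)
    (hspan : (⊤ : Submodule ℂ p) =
      Submodule.span ℂ (Set.range bb ∪ Set.range dd) ⊔ p0)
    -- the spin homomorphism `ν_*` characterized by `[x,y] = [ν_*(x), y]`:
    (ν : r →ₗ[ℂ] CliffordAlgebra Q)
    (hν2 : ∀ x : r, equivExterior Q (ν x) ∈
        (LinearMap.range (ExteriorAlgebra.ι ℂ : p →ₗ[ℂ] ExteriorAlgebra ℂ p)) ^ 2)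
    (hνdef : ∀ (x : r) (y : p), ι Q ⟨⁅(x : g), (y : g)⁆, hbr x y⟩ = ⁅ν x, ι Q y⁆) :
    ∀ (x : g) (hxr : x ∈ r), x ∈ hr →
      ν ⟨x, hxr⟩ = (1/2 : ℂ) • ∑ i, γ i x • (ι Q (bb i) * ι Q (dd i) - 1) := by
  intro x hxr hx
  classical
  set Bp : LinearMap.BilinForm ℂ p := B.restrict p with hBpdef
  have hBpapp : ∀ u v : p, Bp u v = B (u : g) (v : g) := fun u v => rfl
  have hsymm_p : ∀ u v : p, Bp u v = Bp v u := fun u v => hBsymm.eq (u : g) (v : g)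
  have hflip : Bp.flip = Bp := LinearMap.ext₂ fun u v => hsymm_p v u
  have hpolar : ∀ u v : p, QuadraticMap.polar Q u v = 2 * Bp u v := by
    intro u v
    rw [hQ, LinearMap.BilinMap.polar_toQuadraticMap, hsymm_p v u]
    ring
  -- nondegeneracy of Bp
  have hcompl : IsCompl r.toSubmodule (B.orthogonal r.toSubmodule) :=
    LinearMap.BilinForm.isCompl_orthogonal_of_restrict_nondegenerate hBsymm.isRefl hBr
  have hBpnd : Bp.Nondegenerate := by
    refine (LinearMap.IsRefl.nondegenerate_iff_separatingLeft
      (fun u v h => (hsymm_p v u).trans h)).mpr ?_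
    intro u hu
    have hg : (u : g) = 0 := by
      apply hBnd.1
      intro w
      have hw : w ∈ r.toSubmodule ⊔ B.orthogonal r.toSubmodule := by
        rw [hcompl.sup_eq_top]; exact Submodule.mem_top
      obtain ⟨a, ha, b, hb, rfl⟩ := Submodule.mem_sup.mp hw
      have hu' : (u : g) ∈ B.orthogonal r.toSubmodule := hp ▸ u.2
      have h1 : B a (u : g) = 0 :=
        (LinearMap.BilinForm.mem_orthogonal_iff.mp hu') a ha
      have hua : B (u : g) a = 0 := (hBsymm.eq (u : g) a).trans h1
      have hub : B (u : g) b = 0 := hu ⟨b, hp ▸ hb⟩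
      simp [map_add, hua, hub]
    exact Subtype.ext hg
  -- the adjoint action of x on p
  let adx : p →ₗ[ℂ] p :=
    { toFun := fun y => ⟨⁅x, (y : g)⁆, hbr ⟨x, hxr⟩ y⟩
      map_add' := fun y z => Subtype.ext (by simp)
      map_smul' := fun t y => Subtype.ext (by simp) }
  have hadx : ∀ y : p, ((adx y : p) : g) = ⁅x, (y : g)⁆ := fun y => rfl
  -- the linear map L measuring the difference of the two sides on generators
  let L : p →ₗ[ℂ] CliffordAlgebra Q :=
    (ι Q).comp adx - ∑ i, γ i x •
      ((Bp (dd i)).smulRight (ι Q (bb i)) - (Bp (bb i)).smulRight (ι Q (dd i)))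
  have hLapp : ∀ y : p, L y = ι Q (adx y) -
      ∑ i, γ i x • (Bp (dd i) y • ι Q (bb i) - Bp (bb i) y • ι Q (dd i)) := by
    intro y
    simp only [L, LinearMap.sub_apply, LinearMap.coe_comp, Function.comp_apply,
      LinearMap.coe_sum, Finset.sum_apply, LinearMap.smul_apply,
      LinearMap.smulRight_apply, smul_sub]
  have hgen_b : ∀ j, L (bb j) = 0 := by
    intro j
    rw [hLapp]
    have h1 : adx (bb j) = γ j x • bb j := Subtype.ext (by
      rw [hadx, hwb x hx j]; rfl)
    have h2 : ∀ i, γ i x • (Bp (dd i) (bb j) • ι Q (bb i) - Bp (bb i) (bb j) • ι Q (dd i))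
        = if i = j then γ j x • ι Q (bb j) else 0 := by
      intro i
      have hdb : Bp (dd i) (bb j) = if i = j then 1 else 0 := by
        rw [hBpapp, ← hBsymm.eq (bb j : g) (dd i : g), hdual j i]
        simp [eq_comm]
      have hbbz : Bp (bb i) (bb j) = 0 := hbiso i j
      by_cases h : i = j
      · subst h; simp [hdb, hbbz]
      · simp [hdb, hbbz, h]
    rw [Finset.sum_congr rfl (fun i _ => h2 i), Finset.sum_ite_eq' Finset.univ j
      (fun _ => γ j x • ι Q (bb j)), h1, map_smul]
    simp
  have hgen_d : ∀ j, L (dd j) = 0 := by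
    intro j
    rw [hLapp]
    have h1 : adx (dd j) = (-(γ j x)) • dd j := Subtype.ext (by
      rw [hadx, hwd x hx j]; rfl)
    have h2 : ∀ i, γ i x • (Bp (dd i) (dd j) • ι Q (bb i) - Bp (bb i) (dd j) • ι Q (dd i))
        = if i = j then (-(γ j x)) • ι Q (dd j) else 0 := by
      intro i
      have hbd : Bp (bb i) (dd j) = if i = j then 1 else 0 := hdual i j
      have hddz : Bp (dd i) (dd j) = 0 := hdiso i j
      by_cases h : i = j
      · subst h; simp [hbd, hddz]
      · simp [hbd, hddz, h]
    rw [Finset.sum_congr rfl (fun i _ => h2 i), Finset.sum_ite_eq' Finset.univ j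
      (fun _ => (-(γ j x)) • ι Q (dd j)), h1, map_smul]
    simp
  have hp0L : ∀ z ∈ p0, L z = 0 := by
    intro z hz
    rw [hLapp]
    have h1 : adx z = 0 := Subtype.ext (by rw [hadx, hp0 z hz x hx]; rfl)
    have h2 : ∀ i, γ i x • (Bp (dd i) z • ι Q (bb i) - Bp (bb i) z • ι Q (dd i)) = 0 := by
      intro i
      have hdz : γ i x * B (dd i : g) (z : g) = 0 := by
        have e1 : B (dd i : g) ⁅x, (z : g)⁆ = 0 := by rw [hp0 z hz x hx]; simp
        have e2 : B ⁅(dd i : g), x⁆ (z : g) = 0 := by rw [hBinv]; exact e1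
        have e3 : ⁅(dd i : g), x⁆ = γ i x • (dd i : g) := by
          rw [← lie_skew, hwd x hx i]; simp
        rw [e3] at e2
        simpa using e2
      have hbz : γ i x * B (bb i : g) (z : g) = 0 := by
        have e1 : B (bb i : g) ⁅x, (z : g)⁆ = 0 := by rw [hp0 z hz x hx]; simp
        have e2 : B ⁅(bb i : g), x⁆ (z : g) = 0 := by rw [hBinv]; exact e1
        have e3 : ⁅(bb i : g), x⁆ = (-(γ i x)) • (bb i : g) := by
          rw [← lie_skew, hwb x hx i]; simp
        rw [e3] at e2
        simp only [map_smul, LinearMap.smul_apply, smul_eq_mul, neg_mul, neg_eq_zero] at e2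
        simpa using e2
      rw [smul_sub, smul_smul, smul_smul, hBpapp, hBpapp, hdz, hbz]
      simp
    rw [Finset.sum_congr rfl (fun i _ => h2 i), h1]
    simp
  have hL : ∀ y : p, L y = 0 := by
    intro y
    have hy : y ∈ (⊤ : Submodule ℂ p) := Submodule.mem_top
    rw [hspan] at hy
    obtain ⟨s, hs, z, hz, rfl⟩ := Submodule.mem_sup.mp hy
    rw [map_add, hp0L z hz, add_zero]
    refine Submodule.span_induction ?_ ?_ ?_ ?_ hs
    · rintro u (⟨j, rfl⟩ | ⟨j, rfl⟩)
      · exact hgen_b j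
      · exact hgen_d j
    · exact map_zero L
    · intro u v _ _ hu hv; rw [map_add, hu, hv, add_zero]
    · intro a u _ hu; rw [map_smul, hu, smul_zero]
  have key_comm : ∀ y : p, ι Q (adx y) =
      ∑ i, γ i x • (Bp (dd i) y • ι Q (bb i) - Bp (bb i) y • ι Q (dd i)) := by
    intro y
    have := hL y
    rw [hLapp] at this
    linear_combination (norm := abel) this
  set W : CliffordAlgebra Q := (1/2 : ℂ) • ∑ i, γ i x • (ι Q (bb i) * ι Q (dd i) - 1)
    with hWdef
  have hcommW : ∀ y : p, W * ι Q y - ι Q y * W =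
      ∑ i, γ i x • (Bp (dd i) y • ι Q (bb i) - Bp (bb i) y • ι Q (dd i)) := by
    intro y
    rw [hWdef, smul_mul_assoc, mul_smul_comm, ← smul_sub, Finset.sum_mul, Finset.mul_sum,
      ← Finset.sum_sub_distrib]
    have e2 : ∀ i ∈ Finset.univ, (γ i x • (ι Q (bb i) * ι Q (dd i) - 1)) * ι Q y
        - ι Q y * (γ i x • (ι Q (bb i) * ι Q (dd i) - 1))
        = γ i x • (QuadraticMap.polar Q (dd i) y • ι Q (bb i)
            - QuadraticMap.polar Q (bb i) y • ι Q (dd i)) := by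
      intro i _
      rw [smul_mul_assoc, mul_smul_comm, ← smul_sub]
      congr 1
      rw [sub_mul, mul_sub, one_mul, mul_one, sub_sub_sub_cancel_right]
      exact aux_comm_ii Q (bb i) (dd i) y
    rw [Finset.sum_congr rfl e2, Finset.smul_sum]
    refine Finset.sum_congr rfl fun i _ => ?_
    rw [hpolar, hpolar, smul_sub, smul_sub, smul_sub, smul_smul, smul_smul, smul_smul,
      smul_smul, smul_smul, smul_smul]
    congr 1
    · congr 1; ring
    · congr 1; ring
  have hν_comm : ∀ y : p, ν ⟨x, hxr⟩ * ι Q y - ι Q y * ν ⟨x, hxr⟩ = ι Q (adx y) := by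
    intro y
    have h := (hνdef ⟨x, hxr⟩ y).symm
    rw [Ring.lie_def] at h
    exact h
  have hlie : ∀ y : p, (ν ⟨x, hxr⟩ - W) * ι Q y - ι Q y * (ν ⟨x, hxr⟩ - W) = 0 := by
    intro y
    have key : ν ⟨x, hxr⟩ * ι Q y - ι Q y * ν ⟨x, hxr⟩ = W * ι Q y - ι Q y * W := by
      rw [hν_comm y, hcommW y]
      exact key_comm y
    have expand : (ν ⟨x, hxr⟩ - W) * ι Q y - ι Q y * (ν ⟨x, hxr⟩ - W)
        = (ν ⟨x, hxr⟩ * ι Q y - ι Q y * ν ⟨x, hxr⟩) - (W * ι Q y - ι Q y * W) := by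
      noncomm_ring
    rw [expand, key, sub_self]
  -- membership of the image of W in the degree-2 part of the exterior algebra
  have hWmem : equivExterior Q W ∈
      (LinearMap.range (ExteriorAlgebra.ι ℂ : p →ₗ[ℂ] ExteriorAlgebra ℂ p)) ^ 2 := by
    rw [hWdef, map_smul, map_sum]
    refine Submodule.smul_mem _ _ (Submodule.sum_mem _ fun i _ => ?_)
    rw [map_smul]
    refine Submodule.smul_mem _ _ ?_
    rw [map_sub, aux_fwd_ii Bp hflip Q hQ]
    have h1 : Bp (bb i) (dd i) = 1 := by rw [hBpapp, hdual i i]; simp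
    have h2 : equivExterior Q (1 : CliffordAlgebra Q) = 1 := by
      rw [equivExterior, changeFormEquiv_apply, changeForm_one]
    rw [h1, map_one, h2, add_sub_cancel_right, pow_two]
    exact Submodule.mul_mem_mul (LinearMap.mem_range_self _ _) (LinearMap.mem_range_self _ _)
  -- a basis of p and its B-dual basis
  let bas := Module.Free.chooseBasis ℂ p
  let db := Bp.dualBasis hBpnd bas
  have hrepr : ∀ v : p, ∑ k, Bp v (bas k) • db k = v := by
    intro v
    have h2 : ∀ k, db.repr v k = Bp v (bas k) := fun k =>
      LinearMap.BilinForm.dualBasis_repr_apply hBpnd bas v k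
    have h := Module.Basis.sum_repr db v
    simp only [h2] at h
    exact h
  have hexp2 : ∀ v : p, ∑ k, QuadraticMap.polar Q v (bas k) • ι Q (db k) = (2:ℂ) • ι Q v := by
    intro v
    have h3 : ∀ k, QuadraticMap.polar Q v (bas k) • ι Q (db k)
        = (2:ℂ) • (Bp v (bas k) • ι Q (db k)) := by
      intro k; rw [hpolar, mul_smul]
    rw [Finset.sum_congr rfl (fun k _ => h3 k), ← Finset.smul_sum]
    have h4 : ∑ k, Bp v (bas k) • ι Q (db k) = ι Q v := by
      simp only [← map_smul]
      rw [← map_sum, hrepr]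
    rw [h4]
  -- the recovery operator F
  let F : CliffordAlgebra Q →ₗ[ℂ] CliffordAlgebra Q :=
    (-(1/4 : ℂ)) • ∑ k, (LinearMap.mulLeft ℂ (ι Q (db k))).comp
      (LinearMap.mulRight ℂ (ι Q (bas k)) - LinearMap.mulLeft ℂ (ι Q (bas k)))
  have hFapp : ∀ c, F c = (-(1/4 : ℂ)) •
      ∑ k, ι Q (db k) * (c * ι Q (bas k) - ι Q (bas k) * c) := by
    intro c
    simp only [F, LinearMap.smul_apply, LinearMap.coe_sum, Finset.sum_apply,
      LinearMap.comp_apply, LinearMap.sub_apply, LinearMap.mulLeft_apply,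
      LinearMap.mulRight_apply]
  have hFgen : ∀ u v : p, F (ι Q u * ι Q v - algebraMap ℂ _ (Bp u v))
      = ι Q u * ι Q v - algebraMap ℂ _ (Bp u v) := by
    intro u v
    rw [hFapp]
    have hterm : ∀ k, ι Q (db k) * ((ι Q u * ι Q v - algebraMap ℂ _ (Bp u v)) * ι Q (bas k)
        - ι Q (bas k) * (ι Q u * ι Q v - algebraMap ℂ _ (Bp u v)))
        = QuadraticMap.polar Q v (bas k) • (ι Q (db k) * ι Q u)
          - QuadraticMap.polar Q u (bas k) • (ι Q (db k) * ι Q v) := by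
      intro k
      have e : (ι Q u * ι Q v - algebraMap ℂ _ (Bp u v)) * ι Q (bas k)
          - ι Q (bas k) * (ι Q u * ι Q v - algebraMap ℂ _ (Bp u v))
          = ι Q u * ι Q v * ι Q (bas k) - ι Q (bas k) * (ι Q u * ι Q v) := by
        rw [sub_mul, mul_sub, ← Algebra.commutes (Bp u v) (ι Q (bas k)),
          sub_sub_sub_cancel_right]
      rw [e, aux_comm_ii Q u v (bas k), mul_sub, mul_smul_comm, mul_smul_comm]
    rw [Finset.sum_congr rfl (fun k _ => hterm k), Finset.sum_sub_distrib]
    have hs1 : ∑ k, QuadraticMap.polar Q v (bas k) • (ι Q (db k) * ι Q u)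
        = ((2:ℂ) • ι Q v) * ι Q u := by
      simp only [← smul_mul_assoc]
      rw [← Finset.sum_mul, hexp2]
    have hs2 : ∑ k, QuadraticMap.polar Q u (bas k) • (ι Q (db k) * ι Q v)
        = ((2:ℂ) • ι Q u) * ι Q v := by
      simp only [← smul_mul_assoc]
      rw [← Finset.sum_mul, hexp2]
    rw [hs1, hs2]
    have hvu : ι Q v * ι Q u
        = algebraMap ℂ _ (QuadraticMap.polar Q v u) - ι Q u * ι Q v := ι_mul_ι_comm v u
    rw [smul_mul_assoc, smul_mul_assoc, hvu, QuadraticMap.polar_comm, hpolar u v]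
    have halg : algebraMap ℂ (CliffordAlgebra Q) (2 * Bp u v)
        = (2:ℂ) • algebraMap ℂ (CliffordAlgebra Q) (Bp u v) := by
      rw [map_mul, ← Algebra.smul_def]
    rw [halg]
    module
  -- F fixes the image of degree-2 elements
  have hFsymm : ∀ ω ∈ (LinearMap.range
        (ExteriorAlgebra.ι ℂ : p →ₗ[ℂ] ExteriorAlgebra ℂ p)) ^ 2,
      F ((equivExterior Q).symm ω) = (equivExterior Q).symm ω := by
    intro ω hω
    rw [pow_two] at hω
    refine Submodule.mul_induction_on hω ?_ ?_
    · rintro m ⟨u, rfl⟩ m' ⟨v, rfl⟩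
      rw [aux_symm_ii Bp hflip Q hQ]
      exact hFgen u v
    · intro a b ha hb
      rw [map_add, map_add, ha, hb]
  have hν_fix : F (ν ⟨x, hxr⟩) = ν ⟨x, hxr⟩ := by
    have h := hFsymm _ (hν2 ⟨x, hxr⟩)
    rwa [LinearEquiv.symm_apply_apply] at h
  have hW_fix : F W = W := by
    have h := hFsymm _ hWmem
    rwa [LinearEquiv.symm_apply_apply] at h
  have hzero : F (ν ⟨x, hxr⟩ - W) = 0 := by
    rw [hFapp]
    have hk : ∀ k ∈ Finset.univ, ι Q (db k) * ((ν ⟨x, hxr⟩ - W) * ι Q (bas k)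
        - ι Q (bas k) * (ν ⟨x, hxr⟩ - W)) = 0 := by
      intro k _; rw [hlie (bas k), mul_zero]
    rw [Finset.sum_congr rfl hk]
    simp
  have hfinal : ν ⟨x, hxr⟩ - W = 0 := by
    calc ν ⟨x, hxr⟩ - W = F (ν ⟨x, hxr⟩ - W) := by rw [map_sub, hν_fix, hW_fix]
    _ = 0 := hzero
  exact sub_eq_zero.mp hfinal
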